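/- If f(x) = xᵀAx − 2bᵀx + c is a quadratic function (A symmetric) that is bounded from below on R^M, then A is positive semidefinite and b ∈ range(A). -/

import Mathlib

open Matrix

private lemma aux_quad {a b c m : ℝ} (h : ∀ t : ℝ, m ≤ a * t ^ 2 + b * t + c) :
    0 ≤ a := by
  by_contra h'
  push_neg at h'
  set t : ℝ := max 1 ((1 + |b| + |c| + |m|) / (-a)) with ht
  have ht1 : (1 : ℝ) ≤ t := le_max_left _ _
  have ht2 : (1 + |b| + |c| + |m|) / (-a) ≤ t := le_max_right _ _
  have hna : 0 < -a := by linarith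
  have hat : a * t ≤ -(1 + |b| + |c| + |m|) := by
    rw [div_le_iff₀ hna] at ht2
    nlinarith
  have := h t
  nlinarith [abs_nonneg b, abs_nonneg c, abs_nonneg m, le_abs_self b, le_abs_self c,
    le_abs_self m, neg_abs_le b, neg_abs_le c, neg_abs_le m]

private lemma aux_lin {b c m : ℝ} (h : ∀ t : ℝ, m ≤ b * t + c) : b = 0 := by
  by_contra hb
  have := h ((m - c - 1) / b)
  rw [mul_div_cancel₀ _ hb] at this
  linarith

theorem quadratic_bddBelow_posSemidef_range {M : ℕ}
    (A : Matrix (Fin M) (Fin M) ℝ) (hsymm : Aᵀ = A)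
    (b : Fin M → ℝ) (c : ℝ)
    (hbdd : ∃ m : ℝ, ∀ x : Fin M → ℝ,
      m ≤ x ⬝ᵥ A.mulVec x - 2 * (b ⬝ᵥ x) + c) :
    A.PosSemidef ∧ ∃ z : Fin M → ℝ, A.mulVec z = b := by
  obtain ⟨m, hm⟩ := hbdd
  -- key: along each direction x, the quadratic in t is bounded below
  have key : ∀ x : Fin M → ℝ, ∀ t : ℝ,
      m ≤ (x ⬝ᵥ A.mulVec x) * t ^ 2 + (-2 * (b ⬝ᵥ x)) * t + c := by
    intro x t
    have := hm (t • x)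
    have h1 : (t • x) ⬝ᵥ A.mulVec (t • x) = (x ⬝ᵥ A.mulVec x) * t ^ 2 := by
      rw [Matrix.mulVec_smul, smul_dotProduct, dotProduct_smul]
      ring_nf
    have h2 : b ⬝ᵥ (t • x) = t * (b ⬝ᵥ x) := by
      rw [dotProduct_smul]; simp [smul_eq_mul]
    rw [h1, h2] at this
    linarith
  have hq : ∀ x : Fin M → ℝ, 0 ≤ x ⬝ᵥ A.mulVec x := fun x => aux_quad (key x)
  have hherm : A.IsHermitian := by
    rwa [Matrix.IsHermitian, Matrix.conjTranspose_eq_transpose_of_trivial]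
  have hpsd : A.PosSemidef := by
    refine .of_dotProduct_mulVec_nonneg hherm fun x => ?_
    simpa using hq x
  refine ⟨hpsd, ?_⟩
  -- orthogonal decomposition in EuclideanSpace
  let K : Submodule ℝ (EuclideanSpace ℝ (Fin M)) := LinearMap.range (Matrix.toEuclideanLin A)
  obtain ⟨y, hy, w, hw, hbyw⟩ := K.exists_add_mem_mem_orthogonal
    ((EuclideanSpace.equiv (Fin M) ℝ).symm b)
  obtain ⟨z, hz⟩ := hy
  -- w is orthogonal to the range of A; by symmetry A w = 0
  have hwperp : ∀ u : Fin M → ℝ, (A.mulVec u) ⬝ᵥ (w : Fin M → ℝ) = 0 := by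
    intro u
    have hu : Matrix.toEuclideanLin A ((WithLp.equiv 2 (Fin M → ℝ)).symm u) ∈ K :=
      LinearMap.mem_range_self _ _
    have := hw _ hu
    rw [real_inner_comm] at this
    simpa [Matrix.toEuclideanLin_apply, PiLp.inner_apply, RCLike.inner_apply,
      dotProduct, mul_comm] using this
  have hAw : A.mulVec (w : Fin M → ℝ) = 0 := by
    funext i
    have hcol : A.mulVec (Pi.single i 1) = fun k => A k i := by
      funext k; simp [Matrix.mulVec_single]
    have h1 := hwperp (Pi.single i 1)
    rw [hcol] at h1
    have h2 : (fun k => A k i) ⬝ᵥ (w : Fin M → ℝ) = (A.mulVec (w : Fin M → ℝ)) i := by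
      conv_rhs => rw [← hsymm]
      simp [Matrix.mulVec, dotProduct, Matrix.transpose_apply]
    rw [h2] at h1
    simpa using h1
  -- use boundedness in direction w to get w = 0
  have hqw : (w : Fin M → ℝ) ⬝ᵥ A.mulVec (w : Fin M → ℝ) = 0 := by
    rw [hAw]; simp
  have hlin : ∀ t : ℝ, m ≤ (-2 * (b ⬝ᵥ (w : Fin M → ℝ))) * t + c := by
    intro t
    have := key (w : Fin M → ℝ) t
    rw [hqw] at this
    linarith
  have hbw : b ⬝ᵥ (w : Fin M → ℝ) = 0 := by
    have := aux_lin hlin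
    linarith
  -- b = A z + w as plain functions (everything is defeq)
  set w' : Fin M → ℝ := (w : Fin M → ℝ) with hw'
  set z' : Fin M → ℝ := (z : Fin M → ℝ) with hz'
  have hzy : A.mulVec z' = (y : Fin M → ℝ) := congrArg WithLp.ofLp hz
  have hb_eq : b = A.mulVec z' + w' := by
    rw [hzy]; have h := congrArg WithLp.ofLp hbyw; simp only [WithLp.ofLp_add] at h; exact h
  have hww : w' ⬝ᵥ w' = 0 := by
    have hAzw : (A.mulVec z') ⬝ᵥ w' = 0 := hwperp _
    have hbw' : b ⬝ᵥ w' = 0 := hbw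
    calc w' ⬝ᵥ w'
        = b ⬝ᵥ w' - (A.mulVec z') ⬝ᵥ w' := by
          rw [hb_eq, add_dotProduct]; ring
      _ = 0 := by rw [hbw', hAzw]; ring
  have hw0 : w' = 0 := by
    funext i
    have hsum : ∑ j, w' j * w' j = 0 := hww
    have := (Finset.sum_eq_zero_iff_of_nonneg
      (fun j _ => mul_self_nonneg (w' j))).mp hsum i (Finset.mem_univ i)
    simpa [mul_self_eq_zero] using this
  refine ⟨z', ?_⟩
  rw [hb_eq, hw0]
  simp
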